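/- Let T be a switch tree with a sink r, and let S be a one-sided convex point set with |S| = |T|. Then T admits an upward planar straight-line embedding into S such that r is mapped to the highest point of S. -/

import Mathlib

open Finset

noncomputable section

/-- 2D cross product / determinant. -/
def det2 (u v : ℝ × ℝ) : ℝ := u.1 * v.2 - u.2 * v.1

/-- General position: pairwise distinct y-coordinates, no three collinear. -/
def GenPos (S : Finset (ℝ × ℝ)) : Prop :=
  (∀ p ∈ S, ∀ q ∈ S, p ≠ q → p.2 ≠ q.2) ∧
  (∀ p ∈ S, ∀ q ∈ S, ∀ r ∈ S, p ≠ q → p ≠ r → q ≠ r →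
    ¬ Collinear ℝ ({p, q, r} : Set (ℝ × ℝ)))

/-- Convex position: general position and no point in the convex hull of the others. -/
def ConvexPos (S : Finset (ℝ × ℝ)) : Prop :=
  GenPos S ∧ ∀ p ∈ S, p ∉ convexHull ℝ (↑(S.erase p) : Set (ℝ × ℝ))

def IsLowest (S : Finset (ℝ × ℝ)) (b : ℝ × ℝ) : Prop := b ∈ S ∧ ∀ p ∈ S, b.2 ≤ p.2

def IsHighest (S : Finset (ℝ × ℝ)) (t : ℝ × ℝ) : Prop := t ∈ S ∧ ∀ p ∈ S, p.2 ≤ t.2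

/-- One-sided convex point set: all points other than the lowest point `b` and the
highest point `t` lie strictly on one side of the line through `b` and `t`. -/
def OneSided (S : Finset (ℝ × ℝ)) : Prop :=
  ConvexPos S ∧ ∃ b t, IsLowest S b ∧ IsHighest S t ∧
    ((∀ p ∈ S, p ≠ b → p ≠ t → 0 < det2 (t - b) (p - b)) ∨
     (∀ p ∈ S, p ≠ b → p ≠ t → det2 (t - b) (p - b) < 0))

/-- Upward planar straight-line embedding of a digraph (given by its arc relation `Adj`)
into the point set `S` via the vertex placement `f`: vertices go injectively to points of
`S`, every arc goes strictly upward, and two (distinct) arcs may only meet at common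
endpoints. -/
def UPSE {V : Type*} (Adj : V → V → Prop) (S : Finset (ℝ × ℝ)) (f : V → ℝ × ℝ) : Prop :=
  Function.Injective f ∧ (∀ v, f v ∈ S) ∧
  (∀ u v, Adj u v → (f u).2 < (f v).2) ∧
  (∀ a b c d, Adj a b → Adj c d → (a, b) ≠ (c, d) →
    ∀ p, p ∈ segment ℝ (f a) (f b) → p ∈ segment ℝ (f c) (f d) →
      p ∈ ({f a, f b} : Set (ℝ × ℝ)) ∧ p ∈ ({f c, f d} : Set (ℝ × ℝ)))

/-- A directed tree: an orientation (no 2-cycles, no loops) whose underlying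
undirected graph is a tree. -/
def IsDirTree {V : Type*} (Adj : V → V → Prop) : Prop :=
  (∀ u v, Adj u v → ¬ Adj v u) ∧ (∀ v, ¬ Adj v v) ∧
  (SimpleGraph.fromRel Adj).IsTree

/-- Switch digraph: every vertex is a source or a sink. -/
def IsSwitch {V : Type*} (Adj : V → V → Prop) : Prop :=
  ∀ v, (∀ u, ¬ Adj u v) ∨ (∀ u, ¬ Adj v u)


/-- noncrossing intervals: disjoint or nested -/
def NC (x1 y1 x2 y2 : ℕ) : Prop :=
  y1 ≤ x2 ∨ y2 ≤ x1 ∨ (x1 ≤ x2 ∧ y2 ≤ y1) ∨ (x2 ≤ x1 ∧ y1 ≤ y2)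

lemma det2_affine (D q x y : ℝ × ℝ) (α β : ℝ) (h : α + β = 1) :
    det2 D (α • x + β • y - q) = α * det2 D (x - q) + β * det2 D (y - q) := by
  have hβ : β = 1 - α := by linarith
  subst hβ
  simp [det2, Prod.fst_add, Prod.snd_add, Prod.fst_sub, Prod.snd_sub, Prod.smul_fst,
    Prod.smul_snd, smul_eq_mul]
  ring

lemma seg_coord {x y pt : ℝ × ℝ} (h : pt ∈ segment ℝ x y) :
    ∃ α β : ℝ, 0 ≤ α ∧ 0 ≤ β ∧ α + β = 1 ∧ pt.1 = α * x.1 + β * y.1 ∧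
      pt.2 = α * x.2 + β * y.2 := by
  obtain ⟨α, β, hα, hβ, hαβ, rfl⟩ := h
  exact ⟨α, β, hα, hβ, hαβ, by simp [Prod.fst_add, Prod.smul_fst, smul_eq_mul],
    by simp [Prod.snd_add, Prod.smul_snd, smul_eq_mul]⟩

lemma seg_top {x y pt : ℝ × ℝ} (hxy : x.2 < y.2) (h : pt ∈ segment ℝ x y) :
    pt.2 ≤ y.2 ∧ (pt.2 = y.2 → pt = y) := by
  obtain ⟨α, β, hα, hβ, hαβ, rfl⟩ := h
  have h2 : (α • x + β • y).2 = α * x.2 + β * y.2 := by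
    simp [Prod.snd_add, Prod.smul_snd, smul_eq_mul]
  have key : α * (y.2 - x.2) ≥ 0 := mul_nonneg hα (by linarith)
  have expand : α * x.2 + β * y.2 = y.2 - α * (y.2 - x.2) := by
    have hβ' : β = 1 - α := by linarith
    subst hβ'; ring
  constructor
  · rw [h2]; linarith
  · intro he
    rw [h2] at he
    have hz : α * (y.2 - x.2) = 0 := by linarith
    have hα0 : α = 0 := by
      rcases mul_eq_zero.mp hz with h | h
      · exact h
      · linarith
    have hβ1 : β = 1 := by linarith
    simp [hα0, hβ1]

lemma seg_bot {x y pt : ℝ × ℝ} (hxy : x.2 < y.2) (h : pt ∈ segment ℝ x y) :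
    x.2 ≤ pt.2 ∧ (pt.2 = x.2 → pt = x) := by
  obtain ⟨α, β, hα, hβ, hαβ, rfl⟩ := h
  have h2 : (α • x + β • y).2 = α * x.2 + β * y.2 := by
    simp [Prod.snd_add, Prod.smul_snd, smul_eq_mul]
  have key : β * (y.2 - x.2) ≥ 0 := mul_nonneg hβ (by linarith)
  have expand : α * x.2 + β * y.2 = x.2 + β * (y.2 - x.2) := by
    have hα' : α = 1 - β := by linarith
    subst hα'; ring
  constructor
  · rw [h2]; linarith
  · intro he
    rw [h2] at he
    have hz : β * (y.2 - x.2) = 0 := by linarith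
    have hβ0 : β = 0 := by
      rcases mul_eq_zero.mp hz with h | h
      · exact h
      · linarith
    have hα1 : α = 1 := by linarith
    simp [hβ0, hα1]

lemma chain_noncross_aux {n : ℕ} (p : Fin n → ℝ × ℝ) (ε : ℝ)
    (hmono : StrictMono fun i => (p i).2)
    (htr : ∀ i j k : Fin n, i < j → j < k → 0 < ε * det2 (p k - p i) (p j - p i))
    (i1 j1 i2 j2 : Fin n) (h1 : i1 < j1) (h2 : i2 < j2)
    (hnc : (j1 : ℕ) ≤ i2 ∨ ((i1 : ℕ) ≤ i2 ∧ (j2 : ℕ) ≤ j1))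
    (hne : (i1, j1) ≠ (i2, j2)) (pt : ℝ × ℝ)
    (hp1 : pt ∈ segment ℝ (p i1) (p j1)) (hp2 : pt ∈ segment ℝ (p i2) (p j2)) :
    pt ∈ ({p i1, p j1} : Set (ℝ × ℝ)) ∧ pt ∈ ({p i2, p j2} : Set (ℝ × ℝ)) := by
  have hy1 : (p i1).2 < (p j1).2 := hmono h1
  have hy2 : (p i2).2 < (p j2).2 := hmono h2
  rcases hnc with hd | ⟨hn1, hn2⟩
  · -- disjoint: j1 ≤ i2
    have hyd : (p j1).2 ≤ (p i2).2 := hmono.monotone (Fin.le_def.mpr hd)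
    obtain ⟨ht1, ht2⟩ := seg_top hy1 hp1
    obtain ⟨hb1, hb2⟩ := seg_bot hy2 hp2
    have e1 : pt.2 = (p j1).2 := le_antisymm ht1 (by linarith)
    have e2 : pt.2 = (p i2).2 := le_antisymm (by linarith) hb1
    refine ⟨?_, ?_⟩
    · right; exact ht2 e1
    · left; exact hb2 e2
  · -- nested : i1 ≤ i2 < j2 ≤ j1
    have hii : i1 ≤ i2 := Fin.le_def.mpr hn1
    have hjj : j2 ≤ j1 := Fin.le_def.mpr hn2
    set L : ℝ × ℝ → ℝ := fun w => ε * det2 (p j1 - p i1) (w - p i1) with hL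
    have hLi1 : L (p i1) = 0 := by simp [hL, det2]
    have hLj1 : L (p j1) = 0 := by simp only [hL, det2]; ring
    have hLaff : ∀ (x y : ℝ × ℝ) (α β : ℝ), α + β = 1 →
        L (α • x + β • y) = α * L x + β * L y := by
      intro x y α β hαβ
      simp only [hL]
      rw [det2_affine _ _ _ _ _ _ hαβ]; ring
    have hLpt : L pt = 0 := by
      obtain ⟨α, β, hα, hβ, hαβ, rfl⟩ := hp1
      rw [hLaff _ _ _ _ hαβ, hLi1, hLj1]; ring
    have hLi2 : 0 ≤ L (p i2) ∧ (i1 < i2 → 0 < L (p i2)) := by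
      constructor
      · rcases eq_or_lt_of_le hii with he | hlt
        · rw [← he, hLi1]
        · exact le_of_lt (htr i1 i2 j1 hlt (lt_of_lt_of_le h2 hjj))
      · intro hlt; exact htr i1 i2 j1 hlt (lt_of_lt_of_le h2 hjj)
    have hLj2 : 0 ≤ L (p j2) ∧ (j2 < j1 → 0 < L (p j2)) := by
      constructor
      · rcases eq_or_lt_of_le hjj with he | hlt
        · rw [he, hLj1]
        · exact le_of_lt (htr i1 j2 j1 (lt_of_le_of_lt hii h2) hlt)
      · intro hlt; exact htr i1 j2 j1 (lt_of_le_of_lt hii h2) hlt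
    obtain ⟨γ, δ, hγ, hδ, hγδ, hpt⟩ := hp2
    have hLcomb : γ * L (p i2) + δ * L (p j2) = 0 := by
      rw [← hLaff _ _ _ _ hγδ, hpt, hLpt]
    have hterm1 : γ * L (p i2) = 0 ∧ δ * L (p j2) = 0 := by
      have t1 : 0 ≤ γ * L (p i2) := mul_nonneg hγ hLi2.1
      have t2 : 0 ≤ δ * L (p j2) := mul_nonneg hδ hLj2.1
      constructor <;> linarith
    rcases eq_or_lt_of_le hii with hie | hilt
    · -- i1 = i2, so j2 < j1
      have hjne : j2 ≠ j1 := by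
        intro hc; apply hne; rw [Prod.mk.injEq]; exact ⟨hie, hc.symm⟩
      have hjlt : j2 < j1 := lt_of_le_of_ne hjj hjne
      have hLj2pos := hLj2.2 hjlt
      have hδ0 : δ = 0 := by
        rcases mul_eq_zero.mp hterm1.2 with h | h
        · exact h
        · linarith
      have hγ1 : γ = 1 := by linarith
      have hpteq : pt = p i2 := by rw [← hpt, hδ0, hγ1]; simp
      rw [hpteq]
      refine ⟨?_, Or.inl rfl⟩
      left
      rw [← hie]
    · -- i1 < i2
      have hLi2pos := hLi2.2 hilt
      have hγ0 : γ = 0 := by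
        rcases mul_eq_zero.mp hterm1.1 with h | h
        · exact h
        · linarith
      have hδ1 : δ = 1 := by linarith
      have hpteq : pt = p j2 := by rw [← hpt, hγ0, hδ1]; simp
      rcases eq_or_lt_of_le hjj with hje | hjlt
      · rw [hpteq, hje]
        exact ⟨Or.inr rfl, by rw [← hje]; right; rfl⟩
      · exfalso
        have hLj2pos := hLj2.2 hjlt
        rcases mul_eq_zero.mp hterm1.2 with h | h
        · rw [h] at hδ1; exact one_ne_zero hδ1.symm
        · linarith

lemma chain_noncross {n : ℕ} (p : Fin n → ℝ × ℝ) (ε : ℝ)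
    (hmono : StrictMono fun i => (p i).2)
    (htr : ∀ i j k : Fin n, i < j → j < k → 0 < ε * det2 (p k - p i) (p j - p i))
    (i1 j1 i2 j2 : Fin n) (h1 : i1 < j1) (h2 : i2 < j2)
    (hnc : NC i1 j1 i2 j2)
    (hne : (i1, j1) ≠ (i2, j2)) (pt : ℝ × ℝ)
    (hp1 : pt ∈ segment ℝ (p i1) (p j1)) (hp2 : pt ∈ segment ℝ (p i2) (p j2)) :
    pt ∈ ({p i1, p j1} : Set (ℝ × ℝ)) ∧ pt ∈ ({p i2, p j2} : Set (ℝ × ℝ)) := by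
  have hne' : (i2, j2) ≠ (i1, j1) := hne.symm
  rcases hnc with h | h | h | h
  · exact chain_noncross_aux p ε hmono htr i1 j1 i2 j2 h1 h2 (Or.inl h) hne pt hp1 hp2
  · exact (chain_noncross_aux p ε hmono htr i2 j2 i1 j1 h2 h1 (Or.inl h) hne' pt hp2 hp1).symm
  · exact chain_noncross_aux p ε hmono htr i1 j1 i2 j2 h1 h2 (Or.inr h) hne pt hp1 hp2
  · exact (chain_noncross_aux p ε hmono htr i2 j2 i1 j1 h2 h1 (Or.inr h) hne' pt hp2 hp1).symm

lemma chain_triple_core (S : Finset (ℝ × ℝ)) (hconv : ConvexPos S) (b₀ t₀ : ℝ × ℝ)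
    (hb₀ : IsLowest S b₀) (ht₀ : IsHighest S t₀) (ε : ℝ)
    (hq : ∀ q ∈ S, q ≠ b₀ → q ≠ t₀ → 0 < ε * det2 (t₀ - b₀) (q - b₀))
    (u v w : ℝ × ℝ) (hu : u ∈ S) (hv : v ∈ S) (hw : w ∈ S)
    (h1 : u.2 < v.2) (h2 : v.2 < w.2) : 0 < ε * det2 (w - u) (v - u) := by
  by_contra hcon
  push_neg at hcon
  have hbu : b₀.2 ≤ u.2 := hb₀.2 u hu
  have htw : w.2 ≤ t₀.2 := ht₀.2 w hw
  have hvb : v ≠ b₀ := fun e => by rw [e] at h1; linarith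
  have hvt : v ≠ t₀ := fun e => by rw [e] at h2; linarith
  have hside : 0 < ε * det2 (t₀ - b₀) (v - b₀) := hq v hv hvb hvt
  have hεne : ε ≠ 0 := by intro e; rw [e] at hside; simp at hside
  have hw2u2 : (0:ℝ) < w.2 - u.2 := by linarith
  have ht2b2 : (0:ℝ) < t₀.2 - b₀.2 := by linarith
  set lam : ℝ := (v.2 - u.2) / (w.2 - u.2) with hlam
  have hlamc : lam * (w.2 - u.2) = v.2 - u.2 := div_mul_cancel₀ _ (ne_of_gt hw2u2)
  have hlam0 : 0 < lam := div_pos (by linarith) hw2u2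
  have hlam1 : lam < 1 := (div_lt_one hw2u2).mpr (by linarith)
  set mu : ℝ := (v.2 - b₀.2) / (t₀.2 - b₀.2) with hmu
  have hmuc : mu * (t₀.2 - b₀.2) = v.2 - b₀.2 := div_mul_cancel₀ _ (ne_of_gt ht2b2)
  have hmu0 : 0 < mu := div_pos (by linarith) ht2b2
  have hmu1 : mu < 1 := (div_lt_one ht2b2).mpr (by linarith)
  set s : ℝ × ℝ := ((1 - lam) * u.1 + lam * w.1, v.2) with hs
  set q : ℝ × ℝ := ((1 - mu) * b₀.1 + mu * t₀.1, v.2) with hq'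
  have hs_eq : (1 - lam) • u + lam • w = s := by
    rw [Prod.ext_iff]
    constructor
    · simp [hs, Prod.fst_add, Prod.smul_fst, smul_eq_mul]
    · simp only [hs, Prod.snd_add, Prod.smul_snd, smul_eq_mul]
      linear_combination hlamc
  have hq_eq : (1 - mu) • b₀ + mu • t₀ = q := by
    rw [Prod.ext_iff]
    constructor
    · simp [hq', Prod.fst_add, Prod.smul_fst, smul_eq_mul]
    · simp only [hq', Prod.snd_add, Prod.smul_snd, smul_eq_mul]
      linear_combination hmuc
  have hs_seg : s ∈ segment ℝ u w := ⟨1 - lam, lam, by linarith, le_of_lt hlam0, by ring, hs_eq⟩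
  have hq_seg : q ∈ segment ℝ b₀ t₀ :=
    ⟨1 - mu, mu, by linarith, le_of_lt hmu0, by ring, hq_eq⟩
  -- x-coordinate comparisons
  have key1 : (v.1 - s.1) * (w.2 - u.2) = -det2 (w - u) (v - u) := by
    simp only [hs, det2, Prod.fst_sub, Prod.snd_sub]
    linear_combination (-(w.1 - u.1)) * hlamc
  have key2 : (q.1 - v.1) * (t₀.2 - b₀.2) = det2 (t₀ - b₀) (v - b₀) := by
    simp only [hq', det2, Prod.fst_sub, Prod.snd_sub]
    linear_combination (t₀.1 - b₀.1) * hmuc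
  have key1' : (ε * (v.1 - s.1)) * (w.2 - u.2) = -(ε * det2 (w - u) (v - u)) := by
    linear_combination ε * key1
  have key2' : (ε * (q.1 - v.1)) * (t₀.2 - b₀.2) = ε * det2 (t₀ - b₀) (v - b₀) := by
    linear_combination ε * key2
  have hxs : 0 ≤ ε * (v.1 - s.1) := by
    by_contra hc
    push_neg at hc
    nlinarith
  have hxq : 0 < ε * (q.1 - v.1) := by
    by_contra hc
    push_neg at hc
    nlinarith
  have hden : 0 < ε * (q.1 - s.1) := by
    have : ε * (q.1 - s.1) = ε * (q.1 - v.1) + ε * (v.1 - s.1) := by ring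
    linarith
  have hdenne : q.1 - s.1 ≠ 0 := by
    intro e
    rw [show ε * (q.1 - s.1) = ε * (q.1 - s.1) from rfl, e] at hden
    simp at hden
  set c : ℝ := (v.1 - s.1) / (q.1 - s.1) with hc
  have hcc : c * (q.1 - s.1) = v.1 - s.1 := div_mul_cancel₀ _ hdenne
  have hc_eq : c = (ε * (v.1 - s.1)) / (ε * (q.1 - s.1)) := by
    rw [hc, mul_div_mul_left _ _ hεne]
  have hc0 : 0 ≤ c := by rw [hc_eq]; exact div_nonneg hxs (le_of_lt hden)
  have hc1 : c ≤ 1 := by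
    rw [hc_eq]
    rw [div_le_one hden]
    have : ε * (q.1 - s.1) = ε * (q.1 - v.1) + ε * (v.1 - s.1) := by ring
    linarith
  have hv_eq : (1 - c) • s + c • q = v := by
    rw [Prod.ext_iff]
    constructor
    · simp only [Prod.fst_add, Prod.smul_fst, smul_eq_mul]
      linear_combination hcc
    · simp only [Prod.snd_add, Prod.smul_snd, smul_eq_mul, hs, hq']
      ring
  have hv_seg : v ∈ segment ℝ s q := ⟨1 - c, c, by linarith, hc0, by ring, hv_eq⟩
  -- memberships in erase
  have hne_of_y : ∀ x : ℝ × ℝ, x.2 ≠ v.2 → x ≠ v := fun x hx e => hx (by rw [e])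
  have hu' : u ∈ (↑(S.erase v) : Set (ℝ × ℝ)) :=
    Finset.mem_coe.mpr (Finset.mem_erase.mpr ⟨hne_of_y u (by linarith), hu⟩)
  have hw' : w ∈ (↑(S.erase v) : Set (ℝ × ℝ)) :=
    Finset.mem_coe.mpr (Finset.mem_erase.mpr ⟨hne_of_y w (by linarith), hw⟩)
  have hb' : b₀ ∈ (↑(S.erase v) : Set (ℝ × ℝ)) :=
    Finset.mem_coe.mpr (Finset.mem_erase.mpr ⟨hne_of_y b₀ (by linarith), hb₀.1⟩)
  have ht' : t₀ ∈ (↑(S.erase v) : Set (ℝ × ℝ)) :=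
    Finset.mem_coe.mpr (Finset.mem_erase.mpr ⟨hne_of_y t₀ (by linarith), ht₀.1⟩)
  have hs_hull : s ∈ convexHull ℝ (↑(S.erase v) : Set (ℝ × ℝ)) :=
    segment_subset_convexHull hu' hw' hs_seg
  have hq_hull : q ∈ convexHull ℝ (↑(S.erase v) : Set (ℝ × ℝ)) :=
    segment_subset_convexHull hb' ht' hq_seg
  exact hconv.2 v hv ((convex_convexHull ℝ _).segment_subset hs_hull hq_hull hv_seg)

open Classical in
lemma onesided_chain (S : Finset (ℝ × ℝ)) (hS : OneSided S) (t : ℝ × ℝ) (ht : IsHighest S t) :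
    ∃ (p : Fin S.card → ℝ × ℝ) (ε : ℝ),
      Function.Injective p ∧ (∀ i, p i ∈ S) ∧ (StrictMono fun i => (p i).2) ∧
      (∀ i : Fin S.card, (i : ℕ) = S.card - 1 → p i = t) ∧
      (∀ i j k : Fin S.card, i < j → j < k → 0 < ε * det2 (p k - p i) (p j - p i)) := by
  have hY : Set.InjOn Prod.snd (↑S : Set (ℝ × ℝ)) := by
    intro a ha b hb h
    by_contra hne
    exact hS.1.1.1 a ha b hb hne h
  have hys : (S.image Prod.snd).card = S.card := Finset.card_image_of_injOn hY
  set iso := (S.image Prod.snd).orderIsoOfFin hys with hiso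
  have hchoose : ∀ i : Fin S.card, ∃! q, q ∈ S ∧ q.2 = (iso i : ℝ) := by
    intro i
    have : (iso i : ℝ) ∈ S.image Prod.snd := (iso i).2
    obtain ⟨q, hq, hq2⟩ := Finset.mem_image.mp this
    refine ⟨q, ⟨hq, hq2⟩, ?_⟩
    rintro q' ⟨hq', hq2'⟩
    exact hY hq' hq (by rw [hq2, hq2'])
  set p : Fin S.card → ℝ × ℝ := fun i => Finset.choose _ S (hchoose i) with hp
  have hpS : ∀ i, p i ∈ S := fun i => Finset.choose_mem _ S (hchoose i)
  have hpy : ∀ i, (p i).2 = (iso i : ℝ) := fun i => (Finset.choose_property _ S (hchoose i))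
  have hmono : StrictMono fun i => (p i).2 := by
    intro i j hij
    simp only [hpy]
    exact_mod_cast iso.strictMono hij
  have hinj : Function.Injective p := by
    intro i j e
    by_contra hne
    rcases lt_or_gt_of_ne hne with h | h
    · exact absurd (congrArg Prod.snd e) (ne_of_lt (hmono h))
    · exact absurd (congrArg Prod.snd e).symm (ne_of_lt (hmono h))
  have hsurj : ∀ x ∈ S, ∃ i, p i = x := by
    intro x hx
    have hx2 : x.2 ∈ S.image Prod.snd := Finset.mem_image_of_mem _ hx
    obtain ⟨i, hi⟩ := iso.surjective ⟨x.2, hx2⟩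
    refine ⟨i, hY (hpS i) hx ?_⟩
    rw [hpy i, hi]
  have htop : ∀ i : Fin S.card, (i : ℕ) = S.card - 1 → p i = t := by
    intro i hi
    obtain ⟨i0, hi0⟩ := hsurj t ht.1
    have hle : ∀ j, j ≤ i0 := by
      intro j
      by_contra hlt
      push_neg at hlt
      have h' : (p i0).2 < (p j).2 := hmono hlt
      rw [hi0] at h'
      exact absurd h' (not_lt.mpr (ht.2 _ (hpS j)))
    have : i = i0 := by
      have h1 : (i0 : ℕ) ≤ (i : ℕ) := by
        rw [hi]; exact Nat.le_sub_one_of_lt i0.2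
      exact le_antisymm (hle i) (Fin.le_def.mpr h1)
    rw [this, hi0]
  obtain ⟨hconv, b₀, t₀, hb₀, ht₀, hside⟩ := hS
  rcases hside with hpos | hneg
  · refine ⟨p, 1, hinj, hpS, hmono, htop, ?_⟩
    intro i j k hij hjk
    exact chain_triple_core S hconv b₀ t₀ hb₀ ht₀ 1
      (fun q hq h1 h2 => by simpa using hpos q hq h1 h2)
      _ _ _ (hpS i) (hpS j) (hpS k) (hmono hij) (hmono hjk)
  · refine ⟨p, -1, hinj, hpS, hmono, htop, ?_⟩
    intro i j k hij hjk
    exact chain_triple_core S hconv b₀ t₀ hb₀ ht₀ (-1)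
      (fun q hq h1 h2 => by simpa using hneg q hq h1 h2)
      _ _ _ (hpS i) (hpS j) (hpS k) (hmono hij) (hmono hjk)

def GoodMap {V : Type} (Adj : V → V → Prop) {n : ℕ} (g : V ≃ Fin n) : Prop :=
  (∀ u v, Adj u v → g u < g v) ∧
  (∀ a b c d, Adj a b → Adj c d → (a, b) ≠ (c, d) →
    NC (g a : ℕ) (g b : ℕ) (g c : ℕ) (g d : ℕ))

def SinkStmt (n : ℕ) : Prop :=
  ∀ (V : Type) [Fintype V], Fintype.card V = n → ∀ Adj : V → V → Prop,
    IsDirTree Adj → IsSwitch Adj → ∀ r : V, (∀ u, ¬ Adj r u) →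
      ∃ g : V ≃ Fin n, GoodMap Adj g ∧ ((g r : ℕ) = n - 1)

def SourceStmt (n : ℕ) : Prop :=
  ∀ (V : Type) [Fintype V], Fintype.card V = n → ∀ Adj : V → V → Prop,
    IsDirTree Adj → IsSwitch Adj → ∀ r : V, (∀ u, ¬ Adj u r) →
      ∃ g : V ≃ Fin n, GoodMap Adj g ∧ ((g r : ℕ) = 0)

lemma fromRel_flip {V : Type} (Adj : V → V → Prop) :
    SimpleGraph.fromRel (fun u v => Adj v u) = SimpleGraph.fromRel Adj := by
  ext u v
  simp only [SimpleGraph.fromRel_adj]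
  tauto

lemma subtree_isDirTree {V : Type} (Adj : V → V → Prop) (hT : IsDirTree Adj)
    (H : SimpleGraph V) (hH : H ≤ SimpleGraph.fromRel Adj)
    (P : V → Prop) (t0 : V)
    (hup : ∀ u, H.Reachable u t0 → P u)
    (hdown : ∀ v, P v → H.Reachable v t0) :
    IsDirTree (fun x y : Subtype P => Adj x.1 y.1) := by
  have ht0 : P t0 := hup t0 (SimpleGraph.Reachable.refl t0)
  set GA := SimpleGraph.fromRel (fun x y : Subtype P => Adj x.1 y.1) with hGA
  have hadj_of : ∀ (x y : V) (hx : P x) (hy : P y), H.Adj x y →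
      GA.Adj ⟨x, hx⟩ ⟨y, hy⟩ := by
    intro x y hx hy h
    have h2 := hH h
    rw [SimpleGraph.fromRel_adj] at h2
    rw [hGA, SimpleGraph.fromRel_adj]
    exact ⟨fun e => h2.1 (congrArg Subtype.val e), h2.2⟩
  have haux : ∀ (v z : V) (w : H.Walk v z) (hz : H.Reachable z t0) (hv : P v),
      GA.Reachable ⟨v, hv⟩ ⟨z, hup z hz⟩ := by
    intro v z w
    induction w with
    | nil => intro hz hv; exact SimpleGraph.Reachable.refl _
    | cons h w ih =>
      intro hz hv
      rename_i x y _
      have hy : P y := hup y (w.reachable.trans hz)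
      exact ((hadj_of x y hv hy h).reachable).trans (ih hz hy)
  have hreach : ∀ (v : V) (hv : P v), GA.Reachable ⟨v, hv⟩ ⟨t0, ht0⟩ := by
    intro v hv
    obtain ⟨w⟩ := hdown v hv
    exact haux v t0 w (SimpleGraph.Reachable.refl t0) hv
  refine ⟨fun u v h => hT.1 _ _ h, fun v h => hT.2.1 _ h, ?_, ?_⟩
  · -- connected
    rw [SimpleGraph.connected_iff]
    exact ⟨fun x y => (hreach x.1 x.2).trans (hreach y.1 y.2).symm, ⟨⟨t0, ht0⟩⟩⟩
  · -- acyclic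
    intro x cyc hcyc
    refine hT.2.2.IsAcyclic _ (hcyc.map (f := ⟨Subtype.val, ?_⟩) (fun _ _ e => Subtype.ext e))
    intro a b h
    rw [SimpleGraph.fromRel_adj] at h
    rw [SimpleGraph.fromRel_adj]
    exact ⟨fun e => h.1 (Subtype.ext e), h.2⟩

lemma source_of_sink {n : ℕ} (h : SinkStmt n) : SourceStmt n := by
  intro V inst hcard Adj hT hsw r hr
  have hT' : IsDirTree (fun u v => Adj v u) :=
    ⟨fun u v h' => hT.1 v u h', hT.2.1, by rw [fromRel_flip]; exact hT.2.2⟩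
  have hsw' : IsSwitch (fun u v : V => Adj v u) := fun v => (hsw v).elim Or.inr Or.inl
  obtain ⟨g', hg', hgr⟩ := h V hcard (fun u v => Adj v u) hT' hsw' r hr
  have hn : 0 < n := hcard ▸ (Fintype.card_pos_iff.mpr ⟨r⟩)
  refine ⟨g'.trans Fin.revPerm, ⟨?_, ?_⟩, ?_⟩
  · intro u v huv
    have := hg'.1 v u huv
    simp only [Equiv.trans_apply, Fin.revPerm_apply]
    exact Fin.rev_lt_rev.mpr this
  · intro a b c d hab hcd hne
    have hne' : (b, a) ≠ (d, c) := by
      intro e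
      rw [Prod.mk.injEq] at e
      exact hne (by rw [Prod.mk.injEq]; exact ⟨e.2, e.1⟩)
    have hnc := hg'.2 b a d c hab hcd hne'
    have la := (g' a).isLt; have lb := (g' b).isLt
    have lc := (g' c).isLt; have ld := (g' d).isLt
    simp only [Equiv.trans_apply, Fin.revPerm_apply, Fin.val_rev]
    unfold NC at hnc ⊢
    omega
  · simp only [Equiv.trans_apply, Fin.revPerm_apply, Fin.val_rev]
    omega

lemma cover_aux {V : Type} (G : SimpleGraph V) (c r : V)
    (hsub : ∀ x y, G.Adj x y → s(x, y) ≠ s(c, r) →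
      (G \ SimpleGraph.fromEdgeSet {s(c, r)}).Adj x y)
    {v z : V} (w : G.Walk v z) (hz : z = r) :
    (G \ SimpleGraph.fromEdgeSet {s(c, r)}).Reachable v c ∨
      (G \ SimpleGraph.fromEdgeSet {s(c, r)}).Reachable v r := by
  induction w with
  | nil => right; rw [hz]
  | cons h w' ih =>
    rename_i x y _
    by_cases he : s(x, y) = s(c, r)
    · rw [Sym2.eq_iff] at he
      rcases he with ⟨rfl, rfl⟩ | ⟨rfl, rfl⟩
      · exact Or.inl (SimpleGraph.Reachable.refl _)
      · exact Or.inr (SimpleGraph.Reachable.refl _)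
    · have hadj' := hsub _ _ h he
      rcases ih hz with hA' | hR
      · exact Or.inl (hadj'.reachable.trans hA')
      · exact Or.inr (hadj'.reachable.trans hR)

lemma sink_embed : ∀ n, SinkStmt n := by
  intro n
  induction n using Nat.strong_induction_on with
  | _ n IH =>
  intro V inst hcard Adj hT hsw r hr
  classical
  by_cases hex : ∃ c, Adj c r
  · -- main case
    obtain ⟨c, hcr⟩ := hex
    set G := SimpleGraph.fromRel Adj with hG
    have hGadj : G.Adj c r := by
      rw [hG, SimpleGraph.fromRel_adj]
      exact ⟨fun e => hr r (e ▸ hcr), Or.inl hcr⟩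
    set G' := G \ SimpleGraph.fromEdgeSet {s(c, r)} with hG'
    have hbridge : ¬ G'.Reachable c r := by
      have hb := SimpleGraph.isAcyclic_iff_forall_adj_isBridge.mp hT.2.2.IsAcyclic hGadj
      exact SimpleGraph.isBridge_iff.mp hb
    have hG'le : G' ≤ G := sdiff_le
    have hG'of : ∀ x y, G.Adj x y → s(x, y) ≠ s(c, r) → G'.Adj x y := by
      intro x y h hne
      rw [hG', SimpleGraph.sdiff_adj]
      refine ⟨h, ?_⟩
      rw [SimpleGraph.fromEdgeSet_adj]
      rintro ⟨h1, -⟩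
      exact hne (by simpa using h1)
    set A : V → Prop := fun v => G'.Reachable v c with hA
    have hcover : ∀ v, A v ∨ G'.Reachable v r := by
      intro v
      obtain ⟨w⟩ := hT.2.2.isConnected.preconnected v r
      exact cover_aux G c r hG'of w rfl
    have hnotboth : ∀ v, A v → G'.Reachable v r → False :=
      fun v h1 h2 => hbridge (h1.symm.trans h2)
    have hAc : A c := SimpleGraph.Reachable.refl c
    have hBr : ¬ A r := fun h => hbridge h.symm
    have hcross : ∀ u v, Adj u v → (u, v) ≠ (c, r) → (A u ↔ A v) := by
      intro u v h hne
      have hGuv : G.Adj u v := by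
        rw [hG, SimpleGraph.fromRel_adj]
        exact ⟨fun e => hT.2.1 u (e ▸ h), Or.inl h⟩
      have hs : s(u, v) ≠ s(c, r) := by
        intro hsym
        rcases Sym2.eq_iff.mp hsym with ⟨rfl, rfl⟩ | ⟨rfl, rfl⟩
        · exact hne rfl
        · exact hr v h
      have hstep := (hG'of _ _ hGuv hs).reachable
      exact ⟨fun ha => hstep.symm.trans ha, fun ha => hstep.trans ha⟩
    -- the two subtrees
    set a := Fintype.card {v // A v} with ha
    set b := Fintype.card {v // ¬ A v} with hb
    have hab : a + b = n := by
      have h1 := Fintype.card_congr (Equiv.sumCompl A)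
      rw [Fintype.card_sum] at h1
      rw [ha, hb, h1, hcard]
    have ha_pos : 0 < a := Fintype.card_pos_iff.mpr ⟨⟨c, hAc⟩⟩
    have hb_pos : 0 < b := Fintype.card_pos_iff.mpr ⟨⟨r, hBr⟩⟩
    have ha_lt : a < n := by omega
    have hb_lt : b < n := by omega
    set AdjA : {v // A v} → {v // A v} → Prop := fun x y => Adj x.1 y.1 with hAdjA
    set AdjB : {v // ¬ A v} → {v // ¬ A v} → Prop := fun x y => Adj x.1 y.1 with hAdjB
    have hTA : IsDirTree AdjA :=
      subtree_isDirTree Adj hT G' (hG' ▸ sdiff_le) A c (fun u h => h) (fun v hv => hv)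
    have hTB : IsDirTree AdjB :=
      subtree_isDirTree Adj hT G' (hG' ▸ sdiff_le) (fun v => ¬ A v) r
        (fun u h hAu => hnotboth u hAu h) (fun v hv => (hcover v).resolve_left hv)
    have hswA : IsSwitch AdjA := fun x => (hsw x.1).imp (fun h u => h u.1) (fun h u => h u.1)
    have hswB : IsSwitch AdjB := fun x => (hsw x.1).imp (fun h u => h u.1) (fun h u => h u.1)
    have hsrcA : ∀ u : {v // A v}, ¬ AdjA u ⟨c, hAc⟩ := by
      intro u hu
      rcases hsw c with h | h
      · exact h u.1 hu
      · exact h r hcr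
    have hsinkB : ∀ u : {v // ¬ A v}, ¬ AdjB ⟨r, hBr⟩ u := fun u h => hr u.1 h
    obtain ⟨gA, hgA, hgAc⟩ :=
      source_of_sink (IH a ha_lt) {v // A v} rfl AdjA hTA hswA ⟨c, hAc⟩ hsrcA
    obtain ⟨gB, hgB, hgBr⟩ := IH b hb_lt {v // ¬ A v} rfl AdjB hTB hswB ⟨r, hBr⟩ hsinkB
    -- assemble
    set g0 : V → Fin n := fun v =>
      if h : A v then ⟨(gA ⟨v, h⟩ : ℕ), by have := (gA ⟨v, h⟩).isLt; omega⟩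
      else ⟨a + (gB ⟨v, h⟩ : ℕ), by have := (gB ⟨v, h⟩).isLt; omega⟩ with hg0
    have hvalA : ∀ (v : V) (h : A v), (g0 v : ℕ) = (gA ⟨v, h⟩ : ℕ) := by
      intro v h; simp only [hg0, dif_pos h]
    have hvalB : ∀ (v : V) (h : ¬ A v), (g0 v : ℕ) = a + (gB ⟨v, h⟩ : ℕ) := by
      intro v h; simp only [hg0, dif_neg h]
    have hg0inj : Function.Injective g0 := by
      intro u v e
      have e' : (g0 u : ℕ) = (g0 v : ℕ) := congrArg Fin.val e
      by_cases hu : A u <;> by_cases hv : A v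
      · rw [hvalA u hu, hvalA v hv] at e'
        have : gA ⟨u, hu⟩ = gA ⟨v, hv⟩ := Fin.ext e'
        exact congrArg Subtype.val (gA.injective this)
      · rw [hvalA u hu, hvalB v hv] at e'
        have := (gA ⟨u, hu⟩).isLt; omega
      · rw [hvalB u hu, hvalA v hv] at e'
        have := (gA ⟨v, hv⟩).isLt; omega
      · rw [hvalB u hu, hvalB v hv] at e'
        have : gB ⟨u, hu⟩ = gB ⟨v, hv⟩ := Fin.ext (by omega)
        exact congrArg Subtype.val (gB.injective this)
    have hg0surj : Function.Surjective g0 := by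
      intro k
      by_cases hk : (k : ℕ) < a
      · refine ⟨(gA.symm ⟨(k : ℕ), hk⟩).1, ?_⟩
        apply Fin.ext
        rw [hvalA _ (gA.symm ⟨(k : ℕ), hk⟩).2]
        have : (⟨(gA.symm ⟨(k : ℕ), hk⟩).1, (gA.symm ⟨(k : ℕ), hk⟩).2⟩ :
            {v // A v}) = gA.symm ⟨(k : ℕ), hk⟩ := rfl
        rw [this, gA.apply_symm_apply]
      · push_neg at hk
        have hkb : (k : ℕ) - a < b := by have := k.isLt; omega
        refine ⟨(gB.symm ⟨(k : ℕ) - a, hkb⟩).1, ?_⟩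
        apply Fin.ext
        rw [hvalB _ (gB.symm ⟨(k : ℕ) - a, hkb⟩).2]
        have : (⟨(gB.symm ⟨(k : ℕ) - a, hkb⟩).1, (gB.symm ⟨(k : ℕ) - a, hkb⟩).2⟩ :
            {v // ¬ A v}) = gB.symm ⟨(k : ℕ) - a, hkb⟩ := rfl
        rw [this, gB.apply_symm_apply]
        simp only []
        omega
    have htri : ∀ u v, Adj u v → (A u ∧ A v) ∨ (¬ A u ∧ ¬ A v) ∨ ((u, v) = (c, r)) := by
      intro u v h
      by_cases he : (u, v) = (c, r)
      · exact Or.inr (Or.inr he)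
      · have hiff := hcross u v h he
        by_cases hu : A u
        · exact Or.inl ⟨hu, hiff.mp hu⟩
        · exact Or.inr (Or.inl ⟨hu, fun hv => hu (hiff.mpr hv)⟩)
    have hgc : (g0 c : ℕ) = 0 := by rw [hvalA c hAc]; exact hgAc
    have hgr' : (g0 r : ℕ) = n - 1 := by
      rw [hvalB r hBr]
      rw [hgBr]
      omega
    refine ⟨Equiv.ofBijective g0 ⟨hg0inj, hg0surj⟩, ⟨?_, ?_⟩, hgr'⟩
    · -- upward
      intro u v h
      have : (g0 u : ℕ) < (g0 v : ℕ) := by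
        rcases htri u v h with ⟨hu, hv⟩ | ⟨hu, hv⟩ | he
        · rw [hvalA u hu, hvalA v hv]
          exact hgA.1 ⟨u, hu⟩ ⟨v, hv⟩ h
        · rw [hvalB u hu, hvalB v hv]
          have := hgB.1 ⟨u, hu⟩ ⟨v, hv⟩ h
          omega
        · rw [Prod.mk.injEq] at he
          obtain ⟨rfl, rfl⟩ := he
          rw [hgc, hgr']
          omega
      exact this
    · -- noncross
      intro p q p' q' h1 h2 hne
      show NC (g0 p : ℕ) (g0 q : ℕ) (g0 p' : ℕ) (g0 q' : ℕ)
      rcases htri p q h1 with ⟨hp, hq⟩ | ⟨hp, hq⟩ | he1 <;>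
        rcases htri p' q' h2 with ⟨hp', hq'⟩ | ⟨hp', hq'⟩ | he2
      · -- both in A
        have hnes : ((⟨p, hp⟩ : {v // A v}), (⟨q, hq⟩ : {v // A v})) ≠ (⟨p', hp'⟩, ⟨q', hq'⟩) := by
          intro e
          rw [Prod.mk.injEq] at e
          have e1 : p = p' := congrArg Subtype.val e.1
          have e2 : q = q' := congrArg Subtype.val e.2
          exact hne (by rw [Prod.mk.injEq]; exact ⟨e1, e2⟩)
        have := hgA.2 _ _ _ _ h1 h2 hnes
        rw [hvalA p hp, hvalA q hq, hvalA p' hp', hvalA q' hq']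
        exact this
      · -- arc1 in A, arc2 in B
        have l1 := (gA ⟨q, hq⟩).isLt
        rw [hvalA q hq, hvalB p' hp']
        unfold NC
        omega
      · -- arc1 in A, arc2 = (c,r)
        rw [Prod.mk.injEq] at he2
        obtain ⟨rfl, rfl⟩ := he2
        have l1 := (g0 q).isLt
        rw [hgc, hgr']
        unfold NC
        omega
      · -- arc1 in B, arc2 in A
        have l1 := (gA ⟨q', hq'⟩).isLt
        rw [hvalB p hp, hvalA q' hq']
        unfold NC
        omega
      · -- both in B
        have hnes : ((⟨p, hp⟩ : {v // ¬ A v}), (⟨q, hq⟩ : {v // ¬ A v})) ≠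
            (⟨p', hp'⟩, ⟨q', hq'⟩) := by
          intro e
          rw [Prod.mk.injEq] at e
          have e1 : p = p' := congrArg Subtype.val e.1
          have e2 : q = q' := congrArg Subtype.val e.2
          exact hne (by rw [Prod.mk.injEq]; exact ⟨e1, e2⟩)
        have := hgB.2 _ _ _ _ h1 h2 hnes
        rw [hvalB p hp, hvalB q hq, hvalB p' hp', hvalB q' hq']
        unfold NC at this ⊢
        omega
      · -- arc1 in B, arc2 = (c,r)
        rw [Prod.mk.injEq] at he2
        obtain ⟨rfl, rfl⟩ := he2
        have l1 := (g0 q).isLt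
        rw [hgc, hgr']
        unfold NC
        omega
      · -- arc1 = (c,r), arc2 in A
        rw [Prod.mk.injEq] at he1
        obtain ⟨rfl, rfl⟩ := he1
        have l1 := (g0 q').isLt
        rw [hgc, hgr']
        unfold NC
        omega
      · -- arc1 = (c,r), arc2 in B
        rw [Prod.mk.injEq] at he1
        obtain ⟨rfl, rfl⟩ := he1
        have l1 := (g0 q').isLt
        rw [hgc, hgr']
        unfold NC
        omega
      · -- both = (c,r)
        exact absurd (he1.trans he2.symm) hne
  · -- r is isolated: single vertex
    push_neg at hex
    have hall : ∀ v, v = r := by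
      intro v
      by_contra hne
      obtain ⟨w⟩ := hT.2.2.isConnected.preconnected r v
      cases w with
      | nil => exact hne rfl
      | cons h w' =>
        rw [SimpleGraph.fromRel_adj] at h
        rcases h.2 with h' | h'
        · exact hr _ h'
        · exact hex _ h'
    have h1 : Fintype.card V = 1 := Fintype.card_eq_one_iff.mpr ⟨r, hall⟩
    have hn1 : n = 1 := by rw [← hcard, h1]
    refine ⟨Fintype.equivFinOfCardEq hcard, ⟨?_, ?_⟩, ?_⟩
    · intro u v h
      rw [hall u] at h
      exact absurd h (hr v)
    · intro a' b' c' d' h _ _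
      rw [hall a'] at h
      exact absurd h (hr b')
    · have := (Fintype.equivFinOfCardEq hcard r).isLt
      omega

theorem switch_tree_UPSE_one_sided_sink {V : Type} [Fintype V] (Adj : V → V → Prop)
    (hT : IsDirTree Adj) (hsw : IsSwitch Adj)
    (r : V) (hr : ∀ u, ¬ Adj r u)
    (S : Finset (ℝ × ℝ)) (hS : OneSided S) (hcard : S.card = Fintype.card V)
    (t : ℝ × ℝ) (ht : IsHighest S t) :
    ∃ f : V → ℝ × ℝ, UPSE Adj S f ∧ f r = t := by
  obtain ⟨p, ε, hpinj, hpS, hmono, htop, htr⟩ := onesided_chain S hS t ht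
  obtain ⟨g, hg, hgr⟩ := sink_embed S.card V hcard.symm Adj hT hsw r hr
  refine ⟨fun v => p (g v), ⟨?_, ?_, ?_, ?_⟩, ?_⟩
  · exact hpinj.comp g.injective
  · intro v; exact hpS _
  · intro u v h; exact hmono (hg.1 u v h)
  · intro a b c d hab hcd hne pt hp1 hp2
    have h1 : g a < g b := hg.1 a b hab
    have h2 : g c < g d := hg.1 c d hcd
    have hnc := hg.2 a b c d hab hcd hne
    have hne' : (g a, g b) ≠ (g c, g d) := by
      intro e
      rw [Prod.mk.injEq] at e
      exact hne (by rw [Prod.mk.injEq]; exact ⟨g.injective e.1, g.injective e.2⟩)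
    exact chain_noncross p ε hmono htr _ _ _ _ h1 h2 hnc hne' pt hp1 hp2
  · exact htop _ hgr
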